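/- First-order consistency of AFE (K = 1): with T^{AFE} = I + Δt·𝓐 + (Δt²/4)·B (B the block matrix with top row (A_{LL}² + A_{LR}A_{RL}, A_{LL}A_{LR} + A_{LR}A_{RR}) and zero bottom row), the local error against the exact propagator satisfies ‖T^{AFE} − exp(Δt·𝓐)‖ ≤ C·Δt² for a constant C depending only on ‖𝓐‖, for all sufficiently small Δt > 0. Hence AFE is first-order accurate in time. -/

import Mathlib

open NormedSpace

set_option maxHeartbeats 1000000 in
lemma exp_quad_bound {A : Type*} [NormedRing A] [NormedAlgebra ℝ A] [CompleteSpace A]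
    (x : A) (hx : ‖x‖ ≤ 1) :
    ‖exp x - 1 - x‖ ≤ Real.exp 1 * ‖x‖ ^ 2 := by
  have hs : HasSum (fun n : ℕ => ((n.factorial : ℝ))⁻¹ • x ^ n) (exp x) :=
    exp_series_hasSum_exp' x
  have h1 : HasSum (fun n : ℕ => (((n+2).factorial : ℝ))⁻¹ • x ^ (n + 2))
      (exp x - ∑ i ∈ Finset.range 2, ((i.factorial : ℝ))⁻¹ • x ^ i) := by
    refine (hasSum_nat_add_iff (f := fun n : ℕ => ((n.factorial : ℝ))⁻¹ • x ^ n) 2).mpr ?_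
    have : exp x - ∑ i ∈ Finset.range 2, ((i.factorial : ℝ))⁻¹ • x ^ i
        + ∑ i ∈ Finset.range 2, ((i.factorial : ℝ))⁻¹ • x ^ i = exp x := by abel
    rw [this]; exact hs
  have hsum : ∑ i ∈ Finset.range 2, ((i.factorial : ℝ))⁻¹ • x ^ i = 1 + x := by
    simp [Finset.sum_range_succ]
  rw [hsum] at h1
  have key : exp x - 1 - x = ∑' n : ℕ, (((n+2).factorial : ℝ))⁻¹ • x ^ (n + 2) := by
    rw [h1.tsum_eq]
    abel
  have hbound : ∀ n : ℕ, ‖(((n+2).factorial : ℝ))⁻¹ • x ^ (n + 2)‖ ≤ ‖x‖ ^ 2 * ((n.factorial : ℝ))⁻¹ := by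
    intro n
    rw [norm_smul]
    have h2 : ‖x ^ (n + 2)‖ ≤ ‖x‖ ^ (n + 2) := norm_pow_le' x (by omega)
    have h3 : ‖x‖ ^ (n + 2) ≤ ‖x‖ ^ 2 := by
      calc ‖x‖ ^ (n + 2) = ‖x‖ ^ 2 * ‖x‖ ^ n := by ring
        _ ≤ ‖x‖ ^ 2 * 1 := by
            exact mul_le_mul_of_nonneg_left (pow_le_one₀ (norm_nonneg x) hx) (by positivity)
        _ = ‖x‖ ^ 2 := by ring
    have h4 : ((n.factorial : ℝ))⁻¹ ≥ (((n+2).factorial : ℝ))⁻¹ := by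
      apply inv_anti₀
      · exact_mod_cast Nat.factorial_pos n
      · exact_mod_cast Nat.factorial_le (by omega)
    have : ‖(((n+2).factorial : ℝ))⁻¹‖ = (((n+2).factorial : ℝ))⁻¹ := by
      rw [Real.norm_eq_abs, abs_of_nonneg]; positivity
    rw [this]
    calc (((n+2).factorial : ℝ))⁻¹ * ‖x ^ (n + 2)‖ ≤ ((n.factorial : ℝ))⁻¹ * ‖x‖ ^ 2 := by
          apply mul_le_mul h4 (h2.trans h3) (norm_nonneg _) (by positivity)
      _ = ‖x‖ ^ 2 * ((n.factorial : ℝ))⁻¹ := by ring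
  have hg : HasSum (fun n : ℕ => ‖x‖ ^ 2 * ((n.factorial : ℝ))⁻¹) (‖x‖ ^ 2 * Real.exp 1) := by
    have := exp_series_hasSum_exp' (𝕂 := ℝ) (1 : ℝ)
    simp only [one_pow, smul_eq_mul, mul_one] at this
    rw [Real.exp_eq_exp_ℝ]
    exact this.mul_left _
  have hsummable : Summable (fun n : ℕ => ‖(((n+2).factorial : ℝ))⁻¹ • x ^ (n + 2)‖) :=
    Summable.of_nonneg_of_le (fun n => norm_nonneg _) hbound hg.summable
  rw [key]
  calc ‖∑' n : ℕ, (((n+2).factorial : ℝ))⁻¹ • x ^ (n + 2)‖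
      ≤ ∑' n : ℕ, ‖(((n+2).factorial : ℝ))⁻¹ • x ^ (n + 2)‖ := norm_tsum_le_tsum_norm hsummable
    _ ≤ ∑' n : ℕ, ‖x‖ ^ 2 * ((n.factorial : ℝ))⁻¹ := Summable.tsum_le_tsum hbound hsummable hg.summable
    _ = ‖x‖ ^ 2 * Real.exp 1 := hg.tsum_eq
    _ = Real.exp 1 * ‖x‖ ^ 2 := by ring

set_option maxHeartbeats 2000000 in
set_option synthInstance.maxHeartbeats 400000 in
/-- first-order consistency of AFE, K = 1: the AFE transition matrix
T^{AFE}(Δt) = I + Δt·𝓐 + (Δt²/4)·B (with B the block matrix with top row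
(A_LL² + A_LR A_RL, A_LL A_LR + A_LR A_RR) and zero bottom row) satisfies
‖T^{AFE}(Δt) − exp(Δt·𝓐)‖ ≤ C·Δt² in operator norm, for a constant C > 0 and all
sufficiently small Δt > 0; hence AFE is first-order accurate in time. -/
theorem stmt14 {n m : ℕ}
    (ALL : Matrix (Fin n) (Fin n) ℝ) (ALR : Matrix (Fin n) (Fin m) ℝ)
    (ARL : Matrix (Fin m) (Fin n) ℝ) (ARR : Matrix (Fin m) (Fin m) ℝ)
    (𝓐 : Matrix (Fin n ⊕ Fin m) (Fin n ⊕ Fin m) ℝ)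
    (h𝓐 : 𝓐 = Matrix.fromBlocks ALL ALR ARL ARR)
    (T : ℝ → Matrix (Fin n ⊕ Fin m) (Fin n ⊕ Fin m) ℝ)
    (hT : ∀ Δt : ℝ, T Δt = 1 + Δt • 𝓐 +
      (Δt ^ 2 / 4) • Matrix.fromBlocks (ALL * ALL + ALR * ARL)
        (ALL * ALR + ALR * ARR) 0 0) :
    ∃ C > (0 : ℝ), ∃ δ > (0 : ℝ), ∀ Δt : ℝ, 0 < Δt → Δt ≤ δ →
      ‖Matrix.toEuclideanCLM (𝕜 := ℝ) (T Δt) -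
        NormedSpace.exp (Matrix.toEuclideanCLM (𝕜 := ℝ) (Δt • 𝓐))‖ ≤ C * Δt ^ 2 := by
  set B : Matrix (Fin n ⊕ Fin m) (Fin n ⊕ Fin m) ℝ :=
    Matrix.fromBlocks (ALL * ALL + ALR * ARL) (ALL * ALR + ALR * ARR) 0 0 with hB
  set a : ℝ := ‖Matrix.toEuclideanCLM (𝕜 := ℝ) 𝓐‖ with ha
  set b : ℝ := ‖Matrix.toEuclideanCLM (𝕜 := ℝ) B‖ with hb
  have ha0 : 0 ≤ a := norm_nonneg _
  have hb0 : 0 ≤ b := norm_nonneg _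
  refine ⟨b / 4 + Real.exp 1 * (a + 1) ^ 2 + 1, by positivity, 1 / (a + 1), by positivity,
    fun Δt hΔt hΔtδ => ?_⟩
  set X := Matrix.toEuclideanCLM (𝕜 := ℝ) (Δt • 𝓐) with hX
  have hXnorm : ‖X‖ = Δt * a := by
    rw [hX, map_smul, norm_smul Δt (Matrix.toEuclideanCLM (𝕜 := ℝ) 𝓐),
      Real.norm_eq_abs, abs_of_pos hΔt]
  have hX1 : ‖X‖ ≤ 1 := by
    rw [hXnorm]
    calc Δt * a ≤ (1 / (a + 1)) * a := by
          exact mul_le_mul_of_nonneg_right hΔtδ ha0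
      _ ≤ 1 := by
          rw [div_mul_eq_mul_div, one_mul, div_le_one (by positivity)]; linarith
  have hsplit : Matrix.toEuclideanCLM (𝕜 := ℝ) (T Δt) -
      NormedSpace.exp X =
      (Δt ^ 2 / 4) • Matrix.toEuclideanCLM (𝕜 := ℝ) B -
      (NormedSpace.exp X - 1 - X) := by
    have hX' : X = Δt • Matrix.toEuclideanCLM (𝕜 := ℝ) 𝓐 := by rw [hX, map_smul]
    rw [hT]
    simp only [map_add, map_one, map_smul, hX']
    abel
  rw [hsplit]
  have h1 : ‖(Δt ^ 2 / 4) • Matrix.toEuclideanCLM (𝕜 := ℝ) B‖ = Δt ^ 2 / 4 * b := by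
    have := norm_smul (Δt ^ 2 / 4) (Matrix.toEuclideanCLM (𝕜 := ℝ) B)
    rw [Real.norm_eq_abs, abs_of_nonneg (show (0:ℝ) ≤ Δt ^ 2 / 4 by positivity)] at this
    exact this
  have h2 : ‖NormedSpace.exp X - 1 - X‖ ≤ Real.exp 1 * ‖X‖ ^ 2 := exp_quad_bound X hX1
  calc ‖(Δt ^ 2 / 4) • Matrix.toEuclideanCLM (𝕜 := ℝ) B -
        (NormedSpace.exp X - 1 - X)‖
      ≤ ‖(Δt ^ 2 / 4) • Matrix.toEuclideanCLM (𝕜 := ℝ) B‖ +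
        ‖NormedSpace.exp X - 1 - X‖ := norm_sub_le _ _
    _ ≤ Δt ^ 2 / 4 * b + Real.exp 1 * (Δt * a) ^ 2 := by
        rw [h1, hXnorm] at *; linarith
    _ ≤ (b / 4 + Real.exp 1 * (a + 1) ^ 2 + 1) * Δt ^ 2 := by
        have h3 : (Δt * a) ^ 2 ≤ (a + 1) ^ 2 * Δt ^ 2 := by nlinarith
        have h4 : Real.exp 1 * (Δt * a) ^ 2 ≤ Real.exp 1 * ((a + 1) ^ 2 * Δt ^ 2) :=
          mul_le_mul_of_nonneg_left h3 (Real.exp_pos 1).le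
        nlinarith [sq_nonneg Δt]
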